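/- Let r1, k1, r2, k2, p, b, e > 0 and m ∈ (0,1), let (x*, y*) with x*, y* > 0 satisfy r1·(1−x*/k1) = p·(1−m)·y*/(1+b·(1−m)·x*) and r2·(1−y*/k2) = −e·p·(1−m)·x*/(1+b·(1−m)·x*), and suppose r1/k1 > b·p·(1−m)²·y*/(1+b·(1−m)·x*). Let (x, y) : [0,∞) → ℝ² be a solution of the non-harvesting subsystem, i.e. x and y are differentiable with x(t), y(t) > 0, x'(t) = r1·x(t)·(1−x(t)/k1) − p·(1−m)·x(t)·y(t)/(1+b·(1−m)·x(t)) and y'(t) = r2·y(t)·(1−y(t)/k2) + e·p·(1−m)·x(t)·y(t)/(1+b·(1−m)·x(t)) for all t ≥ 0. Then (x(t), y(t)) → (x*, y*) as t → ∞. -/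

import Mathlib

open Filter


lemma key_identity (r1 k1 r2 k2 P B e xs ys X Y : ℝ)
    (hk1 : 0 < k1) (hk2 : 0 < k2)
    (hX : 0 < X) (hY : 0 < Y)
    (hK : 0 < 1 + B * xs) (hDX : 0 < 1 + B * X)
    (heq1 : r1 * (1 - xs / k1) = P * ys / (1 + B * xs))
    (heq2 : r2 * (1 - ys / k2) = -(e * P * xs / (1 + B * xs))) :
    e * (1 - xs / X) * (r1 * X * (1 - X / k1) - P*X*Y/(1+B*X))
      + (1+B*xs) * (1 - ys / Y) * (r2*Y*(1-Y/k2) + e*P*X*Y/(1+B*X))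
    = -(e*r1/k1 - e*P*B*ys/((1+B*X)*(1+B*xs)))*(X-xs)^2
      - ((1+B*xs)*r2/k2)*(Y-ys)^2 := by
  have heq1' : r1 * (k1 - xs) * (1 + B*xs) = P * ys * k1 := by
    rw [eq_div_iff hK.ne'] at heq1
    field_simp at heq1; linarith [heq1]
  have heq2' : r2 * (k2 - ys) * (1 + B*xs) = -(e * P * xs * k2) := by
    rw [neg_div', eq_div_iff hK.ne'] at heq2
    field_simp at heq2; linarith [heq2]
  have stepA : e * (1 - xs / X) * (r1 * X * (1 - X / k1) - P*X*Y/(1+B*X))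
      = e * (X - xs) * (r1 * (1 - X / k1) - P*Y/(1+B*X)) := by
    field_simp
  have stepA2 : (1+B*xs) * (1 - ys / Y) * (r2*Y*(1-Y/k2) + e*P*X*Y/(1+B*X))
      = (1+B*xs) * (Y - ys) * (r2*(1-Y/k2) + e*P*X/(1+B*X)) := by
    field_simp
  have stepB : r1 * (1 - X / k1) - P*Y/(1+B*X)
      = -(r1/k1)*(X-xs) - P*((Y-ys)*(1+B*xs) - B*ys*(X-xs))/((1+B*X)*(1+B*xs)) := by
    have h1 : 1 + X * B ≠ 0 := ne_of_gt (by linarith)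
    have h2 : 1 + xs * B ≠ 0 := ne_of_gt (by linarith)
    field_simp
    linear_combination (1+B*X) * heq1'
  have stepC : r2*(1-Y/k2) + e*P*X/(1+B*X)
      = -(r2/k2)*(Y-ys) + e*P*(X-xs)/((1+B*X)*(1+B*xs)) := by
    have h1 : 1 + X * B ≠ 0 := ne_of_gt (by linarith)
    have h2 : 1 + xs * B ≠ 0 := ne_of_gt (by linarith)
    field_simp
    linear_combination (1+B*X) * heq2'
  rw [stepA, stepA2, stepB, stepC]
  field_simp
  ring


noncomputable def lyapPhi (c x : ℝ) : ℝ := x - c - c * Real.log (x / c)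

section Ineq
variable (r1 k1 r2 k2 p b e m xs ys X Y : ℝ)

lemma key_ineq (hr1 : 0 < r1) (hk1 : 0 < k1) (hr2 : 0 < r2) (hk2 : 0 < k2)
    (hP : 0 < p * (1 - m)) (hB : 0 < b * (1 - m)) (he : 0 < e)
    (hxs : 0 < xs) (hys : 0 < ys) (hX : 0 < X) (hY : 0 < Y)
    (heq1 : r1 * (1 - xs / k1) = p * (1 - m) * ys / (1 + b * (1 - m) * xs))
    (heq2 : r2 * (1 - ys / k2) = -(e * (p * (1-m)) * xs / (1 + b * (1 - m) * xs))) :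
    e * (1 - xs / X) * (r1 * X * (1 - X / k1) - p*(1-m)*X*Y/(1+b*(1-m)*X))
      + (1+b*(1-m)*xs) * (1 - ys / Y) * (r2*Y*(1-Y/k2) + e*(p*(1-m))*X*Y/(1+b*(1-m)*X))
    ≤ -(min (e*(r1/k1 - (p*(1-m))*(b*(1-m))*ys/(1+b*(1-m)*xs))) ((1+b*(1-m)*xs)*r2/k2))
        * ((X-xs)^2 + (Y-ys)^2) := by
  have hK : 0 < 1 + b*(1-m) * xs := by positivity
  have hDX : 0 < 1 + b*(1-m) * X := by positivity
  rw [key_identity r1 k1 r2 k2 (p*(1-m)) (b*(1-m)) e xs ys X Y hk1 hk2 hX hY hK hDX heq1 heq2]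
  set c1 : ℝ := e*r1/k1 - e*(p*(1-m))*(b*(1-m))*ys/((1+b*(1-m)*X)*(1+b*(1-m)*xs)) with hc1
  set c2 : ℝ := (1+b*(1-m)*xs)*r2/k2 with hc2
  set cm : ℝ := min (e*(r1/k1 - (p*(1-m))*(b*(1-m))*ys/(1+b*(1-m)*xs))) c2 with hcm
  have h1 : cm ≤ c1 := by
    have hfrac : (p*(1-m))*(b*(1-m))*ys/((1+b*(1-m)*X)*(1+b*(1-m)*xs))
        ≤ (p*(1-m))*(b*(1-m))*ys/(1+b*(1-m)*xs) := by
      apply div_le_div_of_nonneg_left (by positivity) hK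
      nlinarith [mul_pos (mul_pos hB hX) hK]
    have h3 := mul_le_mul_of_nonneg_left hfrac he.le
    calc cm ≤ e*(r1/k1 - (p*(1-m))*(b*(1-m))*ys/(1+b*(1-m)*xs)) := min_le_left _ _
      _ ≤ c1 := by
          rw [hc1]
          have e5 : e * (r1 / k1 - p * (1 - m) * (b * (1 - m)) * ys / (1 + b * (1 - m) * xs))
              - (e * r1 / k1 - e * (p * (1 - m)) * (b * (1 - m)) * ys /
                  ((1 + b * (1 - m) * X) * (1 + b * (1 - m) * xs)))
              = e * (p * (1 - m) * (b * (1 - m)) * ys /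
                  ((1 + b * (1 - m) * X) * (1 + b * (1 - m) * xs)))
                - e * (p * (1 - m) * (b * (1 - m)) * ys / (1 + b * (1 - m) * xs)) := by
            ring
          linarith [h3, e5]
  have h2 : cm ≤ c2 := min_le_right _ _
  nlinarith [sq_nonneg (X - xs), sq_nonneg (Y - ys), h1, h2]
end Ineq

lemma hasDerivAt_exp_const_mul (lam t : ℝ) :
    HasDerivAt (fun s : ℝ => Real.exp (lam * s)) (lam * Real.exp (lam * t)) t := by
  have h1 : HasDerivAt (fun s : ℝ => lam * s) lam t := by
    simpa using (hasDerivAt_id t).const_mul lam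
  have h2 := h1.exp
  convert h2 using 1
  ring

lemma hasDerivAt_lyapPhi {c : ℝ} (hc : 0 < c) {f : ℝ → ℝ} {f' t : ℝ}
    (hf : HasDerivAt f f' t) (hft : 0 < f t) :
    HasDerivAt (fun s => lyapPhi c (f s)) ((1 - c / f t) * f') t := by
  have hg : HasDerivAt (fun s => f s / c) (f' / c) t := hf.div_const c
  have hlog : HasDerivAt (fun s => Real.log (f s / c)) ((f t / c)⁻¹ * (f' / c)) t :=
    (Real.hasDerivAt_log (by positivity)).comp t hg
  have h : HasDerivAt (fun s => lyapPhi c (f s))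
      (f' - c * ((f t / c)⁻¹ * (f' / c))) t :=
    (hf.sub_const c).sub (hlog.const_mul c)
  convert h using 1
  field_simp



lemma log_le_two_sqrt {u : ℝ} (hu : 0 < u) : Real.log u ≤ 2 * (Real.sqrt u - 1) := by
  have h : Real.log u = 2 * Real.log (Real.sqrt u) := by
    rw [Real.log_sqrt hu.le]; ring
  rw [h]
  have := Real.log_le_sub_one_of_pos (Real.sqrt_pos.2 hu)
  linarith

lemma log_ge_aux {c x : ℝ} (hc : 0 < c) (hx : 0 < x) :
    1 - c / x ≤ Real.log (x / c) := by
  have h := Real.log_le_sub_one_of_pos (div_pos hc hx)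
  have hlog : Real.log (c / x) = - Real.log (x / c) := by
    rw [← Real.log_inv]; congr 1; field_simp
  rw [hlog] at h
  linarith

lemma phi_nonneg {c x : ℝ} (hc : 0 < c) (hx : 0 < x) : 0 ≤ lyapPhi c x := by
  have h := Real.log_le_sub_one_of_pos (div_pos hx hc)
  unfold lyapPhi
  have h2 : c * Real.log (x / c) ≤ c * (x / c - 1) := mul_le_mul_of_nonneg_left h hc.le
  have hcx : c * (x / c - 1) = x - c := by field_simp
  linarith

lemma phi_le {c x : ℝ} (hc : 0 < c) (hx : 0 < x) : lyapPhi c x ≤ (x - c)^2 / x := by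
  have h := log_ge_aux hc hx
  unfold lyapPhi
  have h2 : c * (1 - c/x) ≤ c * Real.log (x/c) := mul_le_mul_of_nonneg_left h hc.le
  have e1 : c * (1 - c/x) = c - c^2/x := by field_simp
  have e2 : (x - c)^2 / x = x - 2*c + c^2/x := by field_simp; ring
  linarith

lemma sqrt_sub_sq_le_phi {c x : ℝ} (hc : 0 < c) (hx : 0 < x) :
    (Real.sqrt x - Real.sqrt c)^2 ≤ lyapPhi c x := by
  have h := log_le_two_sqrt (div_pos hx hc)
  have hs : Real.sqrt (x / c) = Real.sqrt x / Real.sqrt c := Real.sqrt_div hx.le c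
  rw [hs] at h
  unfold lyapPhi
  have h2 : c * Real.log (x / c) ≤ c * (2 * (Real.sqrt x / Real.sqrt c - 1)) :=
    mul_le_mul_of_nonneg_left h hc.le
  have hsc : (0:ℝ) < Real.sqrt c := Real.sqrt_pos.2 hc
  have hxx : Real.sqrt x ^ 2 = x := Real.sq_sqrt hx.le
  have hcc : Real.sqrt c ^ 2 = c := Real.sq_sqrt hc.le
  have hmul : Real.sqrt c * Real.sqrt c = c := Real.mul_self_sqrt hc.le
  have e1 : c * (2 * (Real.sqrt x / Real.sqrt c - 1)) = 2 * Real.sqrt c * Real.sqrt x - 2 * c := by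
    field_simp
    linear_combination (-Real.sqrt x) * hcc
  have e3 : (Real.sqrt x - Real.sqrt c)^2 = x + c - 2 * Real.sqrt c * Real.sqrt x := by
    nlinarith [hxx, hcc]
  linarith [e1 ▸ h2, e3]

lemma phi_lb {c x M : ℝ} (hc : 0 < c) (hx : 0 < x) (h : lyapPhi c x ≤ M) :
    c * Real.exp (-((M + c)/c)) ≤ x := by
  -- log(c/x) ≤ (M + c)/c
  have h1 : c * Real.log (c / x) ≤ M + c - x := by
    have : Real.log (c/x) = - Real.log (x/c) := by rw [← Real.log_inv]; congr 1; field_simp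
    unfold lyapPhi at h
    nlinarith [this]
  have h2 : Real.log (c / x) ≤ (M + c)/c := by
    rw [le_div_iff₀ hc]
    nlinarith
  have h3 : c / x ≤ Real.exp ((M + c)/c) := by
    calc c / x ≤ Real.exp (Real.log (c/x)) := le_of_eq (Real.exp_log (div_pos hc hx)).symm
    _ ≤ Real.exp ((M+c)/c) := Real.exp_le_exp.2 h2
  rw [div_le_iff₀ hx] at h3
  rw [Real.exp_neg]
  calc c * (Real.exp ((M+c)/c))⁻¹ ≤ (Real.exp ((M+c)/c) * x) * (Real.exp ((M+c)/c))⁻¹ :=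
        mul_le_mul_of_nonneg_right h3 (by positivity)
    _ = x := by field_simp


set_option maxHeartbeats 1000000 in
/-- Global asymptotic stability of the interior equilibrium of subsystem I
(Theorem 3.3): every positive solution of the non-harvesting subsystem
converges to `(xs, ys)`. -/
theorem stmt_17 (r1 k1 r2 k2 p b e m xs ys : ℝ)
    (hr1 : 0 < r1) (hk1 : 0 < k1) (hr2 : 0 < r2) (hk2 : 0 < k2)
    (hp : 0 < p) (hb : 0 < b) (he : 0 < e) (hm : m ∈ Set.Ioo (0 : ℝ) 1)
    (hxs : 0 < xs) (hys : 0 < ys)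
    (heq1 : r1 * (1 - xs / k1) = p * (1 - m) * ys / (1 + b * (1 - m) * xs))
    (heq2 : r2 * (1 - ys / k2) = -(e * p * (1 - m) * xs / (1 + b * (1 - m) * xs)))
    (hcond : r1 / k1 > b * p * (1 - m) ^ 2 * ys / (1 + b * (1 - m) * xs))
    (x y x' y' : ℝ → ℝ)
    (hdx : ∀ t : ℝ, 0 ≤ t → HasDerivAt x (x' t) t)
    (hdy : ∀ t : ℝ, 0 ≤ t → HasDerivAt y (y' t) t)
    (hxpos : ∀ t : ℝ, 0 ≤ t → 0 < x t)
    (hypos : ∀ t : ℝ, 0 ≤ t → 0 < y t)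
    (hodex : ∀ t : ℝ, 0 ≤ t →
      x' t = r1 * x t * (1 - x t / k1)
        - p * (1 - m) * x t * y t / (1 + b * (1 - m) * x t))
    (hodey : ∀ t : ℝ, 0 ≤ t →
      y' t = r2 * y t * (1 - y t / k2)
        + e * p * (1 - m) * x t * y t / (1 + b * (1 - m) * x t)) :
    Tendsto (fun t : ℝ => (x t, y t)) atTop (nhds (xs, ys)) := by
  obtain ⟨hm0, hm1⟩ := hm
  have h1m : 0 < 1 - m := by linarith
  have hB : 0 < b * (1 - m) := by positivity
  have hP : 0 < p * (1 - m) := by positivity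
  have hK : (0:ℝ) < 1 + b * (1 - m) * xs := by positivity
  have heq2' : r2 * (1 - ys / k2) = -(e * (p * (1 - m)) * xs / (1 + b * (1 - m) * xs)) := by
    linear_combination heq2
  set K : ℝ := 1 + b * (1 - m) * xs with hKdef
  set cmin : ℝ := min (e*(r1/k1 - (p*(1-m))*(b*(1-m))*ys/K)) (K*r2/k2) with hcmindef
  have hcmin_pos : 0 < cmin := by
    apply lt_min
    · have heqc : (p*(1-m))*(b*(1-m))*ys/K = b*p*(1-m)^2*ys/(1+b*(1-m)*xs) := by
        rw [hKdef]; ring_nf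
      rw [heqc]
      have : 0 < r1/k1 - b*p*(1-m)^2*ys/(1+b*(1-m)*xs) := by linarith [hcond]
      positivity
    · positivity
  set W : ℝ → ℝ := fun t => e * lyapPhi xs (x t) + K * lyapPhi ys (y t) with hWdef
  set W' : ℝ → ℝ := fun t => e*((1 - xs/x t)*x' t) + K*((1 - ys/y t)*y' t) with hW'def
  set D : ℝ → ℝ := fun t => (x t - xs)^2 + (y t - ys)^2 with hDdef
  have hdW : ∀ t : ℝ, 0 ≤ t → HasDerivAt W (W' t) t := fun t ht =>
    ((hasDerivAt_lyapPhi hxs (hdx t ht) (hxpos t ht)).const_mul e).add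
      ((hasDerivAt_lyapPhi hys (hdy t ht) (hypos t ht)).const_mul K)
  have hW'le : ∀ t : ℝ, 0 ≤ t → W' t ≤ -cmin * D t := by
    intro t ht
    have hkey := key_ineq r1 k1 r2 k2 p b e m xs ys (x t) (y t) hr1 hk1 hr2 hk2 hP hB he
      hxs hys (hxpos t ht) (hypos t ht) heq1 heq2'
    have hEq : W' t = e * (1 - xs / x t) * (r1 * x t * (1 - x t / k1)
          - p*(1-m)* x t * y t/(1+b*(1-m)* x t))
        + (1+b*(1-m)*xs) * (1 - ys / y t) * (r2* y t *(1- y t /k2)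
          + e*(p*(1-m))* x t * y t/(1+b*(1-m)* x t)) := by
      rw [hW'def]
      simp only
      rw [hodex t ht, hodey t ht, hKdef]
      ring
    rw [hEq, hDdef]
    exact hkey
  have hW'nonpos : ∀ t : ℝ, 0 ≤ t → W' t ≤ 0 := by
    intro t ht
    have h1 := hW'le t ht
    have h2 : 0 ≤ D t := by rw [hDdef]; positivity
    nlinarith [hcmin_pos]
  have hWcont : ContinuousOn W (Set.Ici (0:ℝ)) := fun t ht =>
    ((hdW t ht).continuousAt).continuousWithinAt
  have hanti : AntitoneOn W (Set.Ici (0:ℝ)) := by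
    apply antitoneOn_of_deriv_nonpos (convex_Ici 0) hWcont
    · intro t ht
      rw [interior_Ici] at ht
      exact ((hdW t ht.le).differentiableAt).differentiableWithinAt
    · intro t ht
      rw [interior_Ici] at ht
      rw [(hdW t ht.le).deriv]
      exact hW'nonpos t ht.le
  have hWle0 : ∀ t : ℝ, 0 ≤ t → W t ≤ W 0 :=
    fun t ht => hanti Set.self_mem_Ici ht ht
  have hWnonneg : ∀ t : ℝ, 0 ≤ t → 0 ≤ W t := by
    intro t ht
    have h1 := phi_nonneg hxs (hxpos t ht)
    have h2 := phi_nonneg hys (hypos t ht)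
    rw [hWdef]
    simp only
    nlinarith [he.le, hK.le]
  have hphix_le : ∀ t : ℝ, 0 ≤ t → lyapPhi xs (x t) ≤ W 0 / e := by
    intro t ht
    have h2 := phi_nonneg hys (hypos t ht)
    have h3 : e * lyapPhi xs (x t) + K * lyapPhi ys (y t) ≤ W 0 := hWle0 t ht
    rw [le_div_iff₀ he]
    nlinarith [hK.le]
  have hphiy_le : ∀ t : ℝ, 0 ≤ t → lyapPhi ys (y t) ≤ W 0 / K := by
    intro t ht
    have h1 := phi_nonneg hxs (hxpos t ht)
    have h3 : e * lyapPhi xs (x t) + K * lyapPhi ys (y t) ≤ W 0 := hWle0 t ht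
    rw [le_div_iff₀ hK]
    nlinarith [he.le]
  set ax : ℝ := xs * Real.exp (-((W 0 / e + xs)/xs)) with haxdef
  set ay : ℝ := ys * Real.exp (-((W 0 / K + ys)/ys)) with haydef
  have hax : 0 < ax := by positivity
  have hay : 0 < ay := by positivity
  have hxlb : ∀ t : ℝ, 0 ≤ t → ax ≤ x t := fun t ht =>
    phi_lb hxs (hxpos t ht) (hphix_le t ht)
  have hylb : ∀ t : ℝ, 0 ≤ t → ay ≤ y t := fun t ht =>
    phi_lb hys (hypos t ht) (hphiy_le t ht)
  set C : ℝ := max (e/ax) (K/ay) with hCdef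
  have hC : 0 < C := lt_max_of_lt_left (by positivity)
  have hWleCD : ∀ t : ℝ, 0 ≤ t → W t ≤ C * D t := by
    intro t ht
    have h1 : lyapPhi xs (x t) ≤ (x t - xs)^2 / ax := by
      calc lyapPhi xs (x t) ≤ (x t - xs)^2 / x t := phi_le hxs (hxpos t ht)
        _ ≤ (x t - xs)^2 / ax := div_le_div_of_nonneg_left (sq_nonneg _) hax (hxlb t ht)
    have h2 : lyapPhi ys (y t) ≤ (y t - ys)^2 / ay := by
      calc lyapPhi ys (y t) ≤ (y t - ys)^2 / y t := phi_le hys (hypos t ht)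
        _ ≤ (y t - ys)^2 / ay := div_le_div_of_nonneg_left (sq_nonneg _) hay (hylb t ht)
    have h3 : e * lyapPhi xs (x t) ≤ (e/ax) * (x t - xs)^2 := by
      have := mul_le_mul_of_nonneg_left h1 he.le
      calc e * lyapPhi xs (x t) ≤ e * ((x t - xs)^2 / ax) := this
        _ = (e/ax) * (x t - xs)^2 := by ring
    have h4 : K * lyapPhi ys (y t) ≤ (K/ay) * (y t - ys)^2 := by
      have := mul_le_mul_of_nonneg_left h2 hK.le
      calc K * lyapPhi ys (y t) ≤ K * ((y t - ys)^2 / ay) := this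
        _ = (K/ay) * (y t - ys)^2 := by ring
    have h5 : (e/ax) * (x t - xs)^2 ≤ C * (x t - xs)^2 :=
      mul_le_mul_of_nonneg_right (le_max_left _ _) (sq_nonneg _)
    have h6 : (K/ay) * (y t - ys)^2 ≤ C * (y t - ys)^2 :=
      mul_le_mul_of_nonneg_right (le_max_right _ _) (sq_nonneg _)
    calc W t = e * lyapPhi xs (x t) + K * lyapPhi ys (y t) := rfl
      _ ≤ C * (x t - xs)^2 + C * (y t - ys)^2 := add_le_add (h3.trans h5) (h4.trans h6)
      _ = C * ((x t - xs)^2 + (y t - ys)^2) := by ring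
  set lam : ℝ := cmin / C with hlamdef
  have hlam : 0 < lam := div_pos hcmin_pos hC
  set U : ℝ → ℝ := fun t => W t * Real.exp (lam * t) with hUdef
  have hdexp : ∀ t : ℝ, HasDerivAt (fun s : ℝ => Real.exp (lam * s)) (lam * Real.exp (lam * t)) t :=
    fun t => hasDerivAt_exp_const_mul lam t
  have hdU : ∀ t : ℝ, 0 ≤ t → HasDerivAt U
      (W' t * Real.exp (lam * t) + W t * (lam * Real.exp (lam * t))) t :=
    fun t ht => (hdW t ht).mul (hdexp t)
  have hU'nonpos : ∀ t : ℝ, 0 ≤ t →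
      W' t * Real.exp (lam * t) + W t * (lam * Real.exp (lam * t)) ≤ 0 := by
    intro t ht
    have h1 := hW'le t ht
    have h2 := hWleCD t ht
    have h3 : lam * W t ≤ lam * (C * D t) := mul_le_mul_of_nonneg_left h2 hlam.le
    have h4 : lam * C = cmin := div_mul_cancel₀ cmin hC.ne'
    have h4' : lam * (C * D t) = cmin * D t := by rw [← mul_assoc, h4]
    have h5 : W' t + lam * W t ≤ 0 := by linarith
    have h6 : (0:ℝ) < Real.exp (lam * t) := Real.exp_pos _
    have h7 : (W' t + lam * W t) * Real.exp (lam * t) ≤ 0 * Real.exp (lam * t) :=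
      mul_le_mul_of_nonneg_right h5 h6.le
    rw [zero_mul] at h7
    nlinarith [h7]
  have hantiU : AntitoneOn U (Set.Ici (0:ℝ)) := by
    apply antitoneOn_of_deriv_nonpos (convex_Ici 0)
    · exact fun t ht => ((hdU t ht).continuousAt).continuousWithinAt
    · intro t ht
      rw [interior_Ici] at ht
      exact ((hdU t ht.le).differentiableAt).differentiableWithinAt
    · intro t ht
      rw [interior_Ici] at ht
      rw [(hdU t ht.le).deriv]
      exact hU'nonpos t ht.le
  have hUbound : ∀ t : ℝ, 0 ≤ t → W t * Real.exp (lam * t) ≤ W 0 := by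
    intro t ht
    have := hantiU Set.self_mem_Ici ht ht
    rw [hUdef] at this
    simpa using this
  -- W tends to 0
  have hWbound : ∀ t : ℝ, 0 ≤ t → W t ≤ W 0 * (Real.exp (lam * t))⁻¹ := by
    intro t ht
    have h1 := hUbound t ht
    have h2 : (0:ℝ) < Real.exp (lam * t) := Real.exp_pos _
    calc W t = W t * Real.exp (lam*t) * (Real.exp (lam*t))⁻¹ := by field_simp
        _ ≤ W 0 * (Real.exp (lam*t))⁻¹ := by
            apply mul_le_mul_of_nonneg_right h1 (by positivity)
  have hexp_tendsto : Tendsto (fun t : ℝ => W 0 * (Real.exp (lam * t))⁻¹) atTop (nhds 0) := by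
    have h1 : Tendsto (fun t : ℝ => lam * t) atTop atTop :=
      Tendsto.const_mul_atTop hlam tendsto_id
    have h2 : Tendsto (fun t : ℝ => Real.exp (lam * t)) atTop atTop :=
      Real.tendsto_exp_atTop.comp h1
    have h3 : Tendsto (fun t : ℝ => (Real.exp (lam * t))⁻¹) atTop (nhds 0) :=
      h2.inv_tendsto_atTop
    simpa using h3.const_mul (W 0)
  have hWtendsto : Tendsto W atTop (nhds 0) := by
    apply tendsto_of_tendsto_of_tendsto_of_le_of_le' tendsto_const_nhds hexp_tendsto
    · filter_upwards [eventually_ge_atTop (0:ℝ)] with t ht using hWnonneg t ht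
    · filter_upwards [eventually_ge_atTop (0:ℝ)] with t ht using hWbound t ht
  -- phi tends to 0
  have hWe : Tendsto (fun t => (1/e) * W t) atTop (nhds 0) := by
    simpa using hWtendsto.const_mul (1/e)
  have hphix0 : Tendsto (fun t => lyapPhi xs (x t)) atTop (nhds 0) := by
    apply tendsto_of_tendsto_of_tendsto_of_le_of_le' tendsto_const_nhds hWe
    · filter_upwards [eventually_ge_atTop (0:ℝ)] with t ht using phi_nonneg hxs (hxpos t ht)
    · filter_upwards [eventually_ge_atTop (0:ℝ)] with t ht
      have h2 := phi_nonneg hys (hypos t ht)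
      have h3 : e * lyapPhi xs (x t) ≤ W t := by
        have hW : W t = e * lyapPhi xs (x t) + K * lyapPhi ys (y t) := rfl
        nlinarith [mul_nonneg hK.le h2]
      rw [one_div, inv_mul_eq_div, le_div_iff₀ he]
      linarith [h3]
  have hWK : Tendsto (fun t => (1/K) * W t) atTop (nhds 0) := by
    simpa using hWtendsto.const_mul (1/K)
  have hphiy0 : Tendsto (fun t => lyapPhi ys (y t)) atTop (nhds 0) := by
    apply tendsto_of_tendsto_of_tendsto_of_le_of_le' tendsto_const_nhds hWK
    · filter_upwards [eventually_ge_atTop (0:ℝ)] with t ht using phi_nonneg hys (hypos t ht)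
    · filter_upwards [eventually_ge_atTop (0:ℝ)] with t ht
      have h1 := phi_nonneg hxs (hxpos t ht)
      have h3 : K * lyapPhi ys (y t) ≤ W t := by
        have hW : W t = e * lyapPhi xs (x t) + K * lyapPhi ys (y t) := rfl
        nlinarith [mul_nonneg he.le h1]
      rw [one_div, inv_mul_eq_div, le_div_iff₀ hK]
      linarith [h3]
  -- from phi to convergence
  have key : ∀ (c : ℝ) (hc : 0 < c) (f : ℝ → ℝ), (∀ t : ℝ, 0 ≤ t → 0 < f t) →
      Tendsto (fun t => lyapPhi c (f t)) atTop (nhds 0) →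
      Tendsto f atTop (nhds c) := by
    intro c hc f hfpos hphi
    have hsq : Tendsto (fun t => (Real.sqrt (f t) - Real.sqrt c)^2) atTop (nhds 0) := by
      apply tendsto_of_tendsto_of_tendsto_of_le_of_le' tendsto_const_nhds hphi
      · filter_upwards with t using sq_nonneg _
      · filter_upwards [eventually_ge_atTop (0:ℝ)] with t ht using
          sqrt_sub_sq_le_phi hc (hfpos t ht)
    have habs : Tendsto (fun t => |Real.sqrt (f t) - Real.sqrt c|) atTop (nhds 0) := by
      have h1 : Tendsto (fun t => Real.sqrt ((Real.sqrt (f t) - Real.sqrt c)^2)) atTop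
          (nhds (Real.sqrt 0)) := (Real.continuous_sqrt.tendsto 0).comp hsq
      simpa [Real.sqrt_sq_eq_abs] using h1
    have hsqrt : Tendsto (fun t => Real.sqrt (f t)) atTop (nhds (Real.sqrt c)) := by
      rw [tendsto_iff_dist_tendsto_zero]
      simpa [Real.dist_eq] using habs
    have hsq2 : Tendsto (fun t => (Real.sqrt (f t))^2) atTop (nhds ((Real.sqrt c)^2)) :=
      hsqrt.pow 2
    rw [Real.sq_sqrt hc.le] at hsq2
    apply hsq2.congr'
    filter_upwards [eventually_ge_atTop (0:ℝ)] with t ht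
    exact Real.sq_sqrt (hfpos t ht).le
  have hx := key xs hxs x hxpos hphix0
  have hy := key ys hys y hypos hphiy0
  exact hx.prodMk_nhds hy
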